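/- arXiv:1506.07328 — 5 statements merged into one kernel-verified Lean document; each statement's English description precedes it below -/
import Mathlib

section
/- (Continuity of the discretized VEM bilinear form, first half of Lemma 3.1.) For all v, w ∈ H one has |a_h(v,w)| ≤ M ‖v‖ ‖w‖ with the explicit constant M = ν_max · max(1, α^*), which depends on ν_max and α^* but not on the subspace K. -/
open scoped RealInnerProductSpace

/-- **Continuity of the discretized VEM bilinear form** (first half of Lemma 3.1).
For all `v, w ∈ H`, `|a_h(v,w)| ≤ M ‖v‖ ‖w‖` with `M = ν_max * max 1 α^*`. -/
theorem vem_discrete_form_continuity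
    {H : Type*} [NormedAddCommGroup H] [InnerProductSpace ℝ H]
    (K : Submodule ℝ H) [K.HasOrthogonalProjection]
    (P : H →L[ℝ] H) (hP : ∀ v : H, P v = (K.orthogonalProjectionOnto v : H))
    (N : H →L[ℝ] H) (hNsa : ∀ v w : H, ⟪N v, w⟫ = ⟪v, N w⟫)
    (νmin νmax : ℝ) (hνmin : 0 < νmin) (hνν : νmin ≤ νmax)
    (hNlow : ∀ v : H, νmin * ‖v‖ ^ 2 ≤ ⟪N v, v⟫)
    (hNhigh : ∀ v : H, ‖N v‖ ≤ νmax * ‖v‖)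
    (S : H →ₗ[ℝ] H →ₗ[ℝ] ℝ) (hSsymm : ∀ v w : H, S v w = S w v)
    (αs αS : ℝ) (hαs : 0 < αs) (hαα : αs ≤ αS)
    (hSlow : ∀ v : H, αs * ⟪N v, v⟫ ≤ S v v)
    (hShigh : ∀ v : H, S v v ≤ αS * ⟪N v, v⟫)
    (ah : H → H → ℝ)
    (hah : ∀ v w : H, ah v w = ⟪N (P v), P w⟫ + S (v - P v) (w - P w)) :
    ∀ v w : H, |ah v w| ≤ (νmax * max 1 αS) * ‖v‖ * ‖w‖ := by
  have hνmax : 0 < νmax := lt_of_lt_of_le hνmin hνν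
  have hαS : 0 < αS := lt_of_lt_of_le hαs hαα
  -- S is nonnegative on the diagonal
  have hSnn : ∀ x : H, 0 ≤ S x x := by
    intro x
    have h1 : 0 ≤ αs * ⟪N x, x⟫ := by
      have := hNlow x
      have : (0:ℝ) ≤ ⟪N x, x⟫ := le_trans (by positivity) this
      positivity
    linarith [hSlow x]
  -- Cauchy–Schwarz for S
  have hCS : ∀ x y : H, (S x y) ^ 2 ≤ S x x * S y y := by
    intro x y
    have h : ∀ t : ℝ, 0 ≤ S y y * (t * t) + 2 * S x y * t + S x x := by
      intro t
      have := hSnn (x + t • y)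
      simp only [map_add, map_smul, LinearMap.add_apply, LinearMap.smul_apply,
        smul_eq_mul] at this
      have hsym : S y x = S x y := hSsymm y x
      rw [hsym] at this
      nlinarith [this]
    have hd := discrim_le_zero h
    rw [discrim] at hd
    nlinarith [hd]
  -- bound on |S x y|
  have hSbound : ∀ x y : H, |S x y| ≤ αS * νmax * ‖x‖ * ‖y‖ := by
    intro x y
    have hx : S x x ≤ αS * (νmax * ‖x‖ ^ 2) := by
      have h1 := hShigh x
      have h2 : ⟪N x, x⟫ ≤ νmax * ‖x‖ ^ 2 := by
        calc ⟪N x, x⟫ ≤ ‖N x‖ * ‖x‖ := real_inner_le_norm _ _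
          _ ≤ νmax * ‖x‖ * ‖x‖ := by
              have := hNhigh x
              nlinarith [norm_nonneg x]
          _ = νmax * ‖x‖ ^ 2 := by ring
      nlinarith [hαS.le]
    have hy : S y y ≤ αS * (νmax * ‖y‖ ^ 2) := by
      have h1 := hShigh y
      have h2 : ⟪N y, y⟫ ≤ νmax * ‖y‖ ^ 2 := by
        calc ⟪N y, y⟫ ≤ ‖N y‖ * ‖y‖ := real_inner_le_norm _ _
          _ ≤ νmax * ‖y‖ * ‖y‖ := by
              have := hNhigh y
              nlinarith [norm_nonneg y]
          _ = νmax * ‖y‖ ^ 2 := by ring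
      nlinarith [hαS.le]
    have hsq : (S x y) ^ 2 ≤ (αS * νmax * ‖x‖ * ‖y‖) ^ 2 := by
      calc (S x y) ^ 2 ≤ S x x * S y y := hCS x y
        _ ≤ (αS * (νmax * ‖x‖ ^ 2)) * (αS * (νmax * ‖y‖ ^ 2)) := by
            exact mul_le_mul hx hy (hSnn y) (by positivity)
        _ = (αS * νmax * ‖x‖ * ‖y‖) ^ 2 := by ring
    have hC : (0:ℝ) ≤ αS * νmax * ‖x‖ * ‖y‖ := by positivity
    nlinarith [abs_nonneg (S x y), sq_abs (S x y)]
  intro v w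
  -- Pythagoras
  have pyth : ∀ x : H, ‖P x‖ ^ 2 + ‖x - P x‖ ^ 2 = ‖x‖ ^ 2 := by
    intro x
    have hmem : x - P x ∈ Kᗮ := by
      rw [hP x]; exact K.sub_starProjection_mem_orthogonal x
    have hPm : P x ∈ K := by rw [hP x]; exact (K.orthogonalProjectionOnto x).2
    have hinner : ⟪P x, x - P x⟫ = 0 := hmem (P x) hPm
    have : ‖P x + (x - P x)‖ ^ 2 = ‖P x‖ ^ 2 + 2 * ⟪P x, x - P x⟫ + ‖x - P x‖ ^ 2 :=
      norm_add_sq_real _ _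
    rw [hinner] at this
    simp only [add_sub_cancel] at this
    linarith [this]
  set a := ‖P v‖; set b := ‖v - P v‖; set c := ‖P w‖; set d := ‖w - P w‖
  have ha : 0 ≤ a := norm_nonneg _
  have hb : 0 ≤ b := norm_nonneg _
  have hc : 0 ≤ c := norm_nonneg _
  have hd : 0 ≤ d := norm_nonneg _
  have hv := pyth v
  have hw := pyth w
  have hinner_bd : |⟪N (P v), P w⟫| ≤ νmax * a * c := by
    calc |⟪N (P v), P w⟫| ≤ ‖N (P v)‖ * ‖P w‖ := abs_real_inner_le_norm _ _
      _ ≤ νmax * a * c := by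
          have := hNhigh (P v)
          nlinarith [norm_nonneg (P w)]
  have hS_bd : |S (v - P v) (w - P w)| ≤ αS * νmax * b * d := by
    have := hSbound (v - P v) (w - P w)
    linarith [this]
  have habs : |ah v w| ≤ νmax * a * c + αS * νmax * b * d := by
    rw [hah v w]
    calc |⟪N (P v), P w⟫ + S (v - P v) (w - P w)|
        ≤ |⟪N (P v), P w⟫| + |S (v - P v) (w - P w)| := abs_add_le _ _
      _ ≤ νmax * a * c + αS * νmax * b * d := add_le_add hinner_bd hS_bd
  have hM : max 1 αS ≥ 1 := le_max_left _ _
  have hM2 : max 1 αS ≥ αS := le_max_right _ _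
  have step1 : νmax * a * c + αS * νmax * b * d ≤ νmax * max 1 αS * (a * c + b * d) := by
    nlinarith [mul_nonneg (mul_nonneg hνmax.le (mul_nonneg ha hc)) (sub_nonneg.mpr hM),
      mul_nonneg (mul_nonneg hνmax.le (mul_nonneg hb hd)) (sub_nonneg.mpr hM2)]
  have step2 : a * c + b * d ≤ ‖v‖ * ‖w‖ := by
    have hvn : 0 ≤ ‖v‖ := norm_nonneg _
    have hwn : 0 ≤ ‖w‖ := norm_nonneg _
    nlinarith [sq_nonneg (a * d - b * c), mul_nonneg ha hc, mul_nonneg hb hd,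
      mul_nonneg hvn hwn, sq_nonneg (a * c + b * d - ‖v‖ * ‖w‖)]
  calc |ah v w| ≤ νmax * a * c + αS * νmax * b * d := habs
    _ ≤ νmax * max 1 αS * (a * c + b * d) := step1
    _ ≤ νmax * max 1 αS * (‖v‖ * ‖w‖) := by
        have : (0:ℝ) ≤ νmax * max 1 αS := by positivity
        exact mul_le_mul_of_nonneg_left step2 this
    _ = (νmax * max 1 αS) * ‖v‖ * ‖w‖ := by ring
end

section
/- (Ellipticity of the discretized VEM bilinear form, second half of Lemma 3.1.) For all v ∈ H one has a_h(v,v) ≥ ν_min (‖P v‖² + α_* ‖v − P v‖²) ≥ α ‖v‖² with the explicit constant α = ν_min · min(1, α_*), which depends on ν_min and α_* but not on the subspace K. -/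
open scoped RealInnerProductSpace

/-- **Ellipticity of the discretized VEM bilinear form** (second half of Lemma 3.1).
For all `v ∈ H`, `a_h(v,v) ≥ ν_min (‖P v‖² + α_* ‖v − P v‖²) ≥ α ‖v‖²` with
`α = ν_min * min 1 α_*`. -/
theorem vem_discrete_form_ellipticity
    {H : Type*} [NormedAddCommGroup H] [InnerProductSpace ℝ H]
    (K : Submodule ℝ H) [K.HasOrthogonalProjection]
    (P : H →L[ℝ] H) (hP : ∀ v : H, P v = (K.orthogonalProjectionOnto v : H))
    (N : H →L[ℝ] H) (hNsa : ∀ v w : H, ⟪N v, w⟫ = ⟪v, N w⟫)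
    (νmin νmax : ℝ) (hνmin : 0 < νmin) (hνν : νmin ≤ νmax)
    (hNlow : ∀ v : H, νmin * ‖v‖ ^ 2 ≤ ⟪N v, v⟫)
    (hNhigh : ∀ v : H, ‖N v‖ ≤ νmax * ‖v‖)
    (S : H →ₗ[ℝ] H →ₗ[ℝ] ℝ) (hSsymm : ∀ v w : H, S v w = S w v)
    (αs αS : ℝ) (hαs : 0 < αs) (hαα : αs ≤ αS)
    (hSlow : ∀ v : H, αs * ⟪N v, v⟫ ≤ S v v)
    (hShigh : ∀ v : H, S v v ≤ αS * ⟪N v, v⟫)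
    (ah : H → H → ℝ)
    (hah : ∀ v w : H, ah v w = ⟪N (P v), P w⟫ + S (v - P v) (w - P w)) :
    ∀ v : H,
      νmin * (‖P v‖ ^ 2 + αs * ‖v - P v‖ ^ 2) ≤ ah v v ∧
      (νmin * min 1 αs) * ‖v‖ ^ 2 ≤ νmin * (‖P v‖ ^ 2 + αs * ‖v - P v‖ ^ 2) := by
  intro v
  have h1 : νmin * ‖P v‖ ^ 2 ≤ ⟪N (P v), P v⟫ := hNlow (P v)
  have h2 : νmin * ‖v - P v‖ ^ 2 ≤ ⟪N (v - P v), v - P v⟫ := hNlow (v - P v)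
  have h3 : αs * ⟪N (v - P v), v - P v⟫ ≤ S (v - P v) (v - P v) := hSlow _
  constructor
  · rw [hah]
    have : αs * (νmin * ‖v - P v‖ ^ 2) ≤ S (v - P v) (v - P v) :=
      le_trans (by nlinarith) h3
    nlinarith
  · have horth : ⟪P v, v - P v⟫ = 0 := by
      have hmem : v - P v ∈ Kᗮ := by
        rw [hP]; exact K.sub_starProjection_mem_orthogonal v
      have hPm : P v ∈ K := by rw [hP]; exact (K.orthogonalProjectionOnto v).2
      exact (Submodule.mem_orthogonal K _).mp hmem (P v) hPm
    have hpyth : ‖v‖ ^ 2 = ‖P v‖ ^ 2 + ‖v - P v‖ ^ 2 := by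
      have : v = P v + (v - P v) := by abel
      calc ‖v‖ ^ 2 = ‖P v + (v - P v)‖ ^ 2 := by rw [← this]
        _ = ‖P v‖ ^ 2 + ‖v - P v‖ ^ 2 := by
          have := norm_add_sq_eq_norm_sq_add_norm_sq_real horth
          nlinarith [this]
    have hmin1 : min 1 αs ≤ 1 := min_le_left _ _
    have hmin2 : min 1 αs ≤ αs := min_le_right _ _
    calc (νmin * min 1 αs) * ‖v‖ ^ 2
        = νmin * (min 1 αs * ‖P v‖ ^ 2 + min 1 αs * ‖v - P v‖ ^ 2) := by
          rw [hpyth]; ring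
      _ ≤ νmin * (1 * ‖P v‖ ^ 2 + αs * ‖v - P v‖ ^ 2) := by
          refine mul_le_mul_of_nonneg_left (add_le_add ?_ ?_) hνmin.le
          · exact mul_le_mul_of_nonneg_right hmin1 (sq_nonneg _)
          · exact mul_le_mul_of_nonneg_right hmin2 (sq_nonneg _)
      _ = νmin * (‖P v‖ ^ 2 + αs * ‖v - P v‖ ^ 2) := by ring
end

section
/- (Consistency-error bound for the term T₁, estimate (4.8)/(4.9) of the paper.) For all v, w ∈ H one has |⟨N(P w), P v⟩ − ⟨N w, v⟩| ≤ (2 ν_max ‖w − P w‖ + ‖N w − P(N w)‖) · ‖v‖. By the symmetry of this expression in v and w (N being self-adjoint and P an orthogonal projection), the same quantity is also bounded by (2 ν_max ‖v − P v‖ + ‖N v − P(N v)‖) · ‖w‖. -/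
open scoped RealInnerProductSpace

private lemma vem_T1_aux
    {H : Type*} [NormedAddCommGroup H] [InnerProductSpace ℝ H]
    (K : Submodule ℝ H) [K.HasOrthogonalProjection]
    (P : H →L[ℝ] H) (hP : ∀ v : H, P v = (K.orthogonalProjectionOnto v : H))
    (N : H →L[ℝ] H)
    (νmax : ℝ) (hν : 0 ≤ νmax)
    (hNhigh : ∀ v : H, ‖N v‖ ≤ νmax * ‖v‖) :
    ∀ v w : H,
      |⟪N (P w), P v⟫ - ⟪N w, v⟫|
        ≤ (2 * νmax * ‖w - P w‖ + ‖N w - P (N w)‖) * ‖v‖ := by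
  intro v w
  have hmemK : ∀ u : H, P u ∈ K := by intro u; rw [hP]; exact (K.orthogonalProjectionOnto u).2
  have hmemO : ∀ u : H, u - P u ∈ Kᗮ := by
    intro u; rw [hP]; exact K.sub_starProjection_mem_orthogonal u
  have hzero : ∀ u z : H, ⟪P z, u - P u⟫ = 0 := fun u z =>
    (Submodule.mem_orthogonal K (u - P u)).1 (hmemO u) (P z) (hmemK z)
  have hPnorm : ∀ u : H, ‖P u‖ ≤ ‖u‖ := by
    intro u
    rw [hP]
    calc ‖(K.orthogonalProjectionOnto u : H)‖ = ‖K.orthogonalProjectionOnto u‖ := by simp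
      _ ≤ ‖K.orthogonalProjectionOnto‖ * ‖u‖ := (K.orthogonalProjectionOnto).le_opNorm u
      _ ≤ 1 * ‖u‖ := by gcongr; exact K.orthogonalProjectionOnto_norm_le
      _ = ‖u‖ := one_mul _
  have hQnorm : ∀ u : H, ‖u - P u‖ ≤ ‖u‖ := by
    intro u
    have h1 : ⟪u - P u, u⟫ = ‖u - P u‖ ^ 2 := by
      have h0 : ⟪u - P u, P u⟫ = 0 := by rw [real_inner_comm]; exact hzero u u
      have : ⟪u - P u, u⟫ = ⟪u - P u, P u⟫ + ⟪u - P u, u - P u⟫ := by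
        rw [← inner_add_right]; congr 1; abel
      rw [this, h0, real_inner_self_eq_norm_sq]; ring
    have h2 : ‖u - P u‖ ^ 2 ≤ ‖u - P u‖ * ‖u‖ := by
      rw [← h1]; exact real_inner_le_norm _ _
    rcases eq_or_lt_of_le (norm_nonneg (u - P u)) with h | h
    · rw [← h]; exact norm_nonneg u
    · have : ‖u - P u‖ * ‖u - P u‖ ≤ ‖u - P u‖ * ‖u‖ := by nlinarith
      exact le_of_mul_le_mul_left this h
  have key : ⟪N (P w), P v⟫ - ⟪N w, v⟫
      = ⟪N (P w - w), P v⟫ + ⟪N w - P (N w), P v - v⟫ := by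
    have hz : ⟪P (N w), P v - v⟫ = 0 := by
      have := hzero v (N w)
      rw [show P v - v = -(v - P v) by abel, inner_neg_right, this, neg_zero]
    rw [map_sub, inner_sub_left, inner_sub_left, inner_sub_right, hz]
    ring
  rw [key]
  have b1 : |⟪N (P w - w), P v⟫| ≤ νmax * ‖w - P w‖ * ‖v‖ := by
    calc |⟪N (P w - w), P v⟫| ≤ ‖N (P w - w)‖ * ‖P v‖ := abs_real_inner_le_norm _ _
      _ ≤ (νmax * ‖P w - w‖) * ‖v‖ := by
          apply mul_le_mul (hNhigh _) (hPnorm v) (norm_nonneg _)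
          positivity
      _ = νmax * ‖w - P w‖ * ‖v‖ := by rw [norm_sub_rev]
  have b2 : |⟪N w - P (N w), P v - v⟫| ≤ ‖N w - P (N w)‖ * ‖v‖ := by
    calc |⟪N w - P (N w), P v - v⟫| ≤ ‖N w - P (N w)‖ * ‖P v - v‖ :=
          abs_real_inner_le_norm _ _
      _ ≤ ‖N w - P (N w)‖ * ‖v‖ := by
          gcongr; rw [norm_sub_rev]; exact hQnorm v
  calc |⟪N (P w - w), P v⟫ + ⟪N w - P (N w), P v - v⟫|
      ≤ |⟪N (P w - w), P v⟫| + |⟪N w - P (N w), P v - v⟫| := abs_add_le _ _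
    _ ≤ νmax * ‖w - P w‖ * ‖v‖ + ‖N w - P (N w)‖ * ‖v‖ := add_le_add b1 b2
    _ ≤ (2 * νmax * ‖w - P w‖ + ‖N w - P (N w)‖) * ‖v‖ := by
        have : (0:ℝ) ≤ νmax * ‖w - P w‖ * ‖v‖ := by positivity
        nlinarith

/-- **Consistency-error bound for the term T₁** (estimates (4.8)/(4.9) of the paper).
`|⟪N(P w), P v⟫ − ⟪N w, v⟫| ≤ (2 ν_max ‖w − P w‖ + ‖N w − P(N w)‖) ‖v‖`, and by
symmetry the same quantity is also bounded by
`(2 ν_max ‖v − P v‖ + ‖N v − P(N v)‖) ‖w‖`. -/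
theorem vem_T1_bound
    {H : Type*} [NormedAddCommGroup H] [InnerProductSpace ℝ H]
    (K : Submodule ℝ H) [K.HasOrthogonalProjection]
    (P : H →L[ℝ] H) (hP : ∀ v : H, P v = (K.orthogonalProjectionOnto v : H))
    (N : H →L[ℝ] H) (hNsa : ∀ v w : H, ⟪N v, w⟫ = ⟪v, N w⟫)
    (νmin νmax : ℝ) (hνmin : 0 < νmin) (hνν : νmin ≤ νmax)
    (hNlow : ∀ v : H, νmin * ‖v‖ ^ 2 ≤ ⟪N v, v⟫)
    (hNhigh : ∀ v : H, ‖N v‖ ≤ νmax * ‖v‖) :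
    ∀ v w : H,
      |⟪N (P w), P v⟫ - ⟪N w, v⟫|
        ≤ (2 * νmax * ‖w - P w‖ + ‖N w - P (N w)‖) * ‖v‖ ∧
      |⟪N (P w), P v⟫ - ⟪N w, v⟫|
        ≤ (2 * νmax * ‖v - P v‖ + ‖N v - P (N v)‖) * ‖w‖ := by
  have hν : (0:ℝ) ≤ νmax := le_of_lt (lt_of_lt_of_le hνmin hνν)
  intro v w
  refine ⟨vem_T1_aux K P hP N νmax hν hNhigh v w, ?_⟩
  have hsym : ⟪N (P w), P v⟫ - ⟪N w, v⟫ = ⟪N (P v), P w⟫ - ⟪N v, w⟫ := by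
    rw [hNsa (P w) (P v), hNsa w v, real_inner_comm (P w), real_inner_comm w]
  rw [hsym]
  exact vem_T1_aux K P hP N νmax hν hNhigh w v
end

section
/- (Combined consistency-error estimate, estimate (4.13) of the paper.) Define the consistency discrepancy D(w, r, v) := a_h(w,v) − a(w,v) + ⟨P v − v, B r⟩ (this equals (𝒜_h − 𝒜)((w,r),(v,q)) in the paper, since the divergence and reaction terms of 𝒜_h and 𝒜 coincide). Then for all w, v ∈ H and r ∈ H' one has |D(w, r, v)| ≤ ( (2 + α^*) ν_max ‖w − P w‖ + ‖N w − P(N w)‖ + ‖B r − P(B r)‖ ) · ‖v‖. -/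
open scoped RealInnerProductSpace

/-- **Combined consistency-error estimate** (estimate (4.13) of the paper).
With `D(w, r, v) := a_h(w,v) − a(w,v) + ⟪P v − v, B r⟫`, one has
`|D(w, r, v)| ≤ ((2 + α^*) ν_max ‖w − P w‖ + ‖N w − P(N w)‖ + ‖B r − P(B r)‖) ‖v‖`. -/
theorem vem_consistency_error_4_13
    {H : Type*} [NormedAddCommGroup H] [InnerProductSpace ℝ H]
    {H' : Type*} [NormedAddCommGroup H'] [InnerProductSpace ℝ H']
    (K : Submodule ℝ H) [K.HasOrthogonalProjection]
    (P : H →L[ℝ] H) (hP : ∀ v : H, P v = (K.orthogonalProjectionOnto v : H))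
    (N : H →L[ℝ] H) (hNsa : ∀ v w : H, ⟪N v, w⟫ = ⟪v, N w⟫)
    (νmin νmax : ℝ) (hνmin : 0 < νmin) (hνν : νmin ≤ νmax)
    (hNlow : ∀ v : H, νmin * ‖v‖ ^ 2 ≤ ⟪N v, v⟫)
    (hNhigh : ∀ v : H, ‖N v‖ ≤ νmax * ‖v‖)
    (S : H →ₗ[ℝ] H →ₗ[ℝ] ℝ) (hSsymm : ∀ v w : H, S v w = S w v)
    (αs αS : ℝ) (hαs : 0 < αs) (hαα : αs ≤ αS)
    (hSlow : ∀ v : H, αs * ⟪N v, v⟫ ≤ S v v)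
    (hShigh : ∀ v : H, S v v ≤ αS * ⟪N v, v⟫)
    (ah : H → H → ℝ)
    (hah : ∀ v w : H, ah v w = ⟪N (P v), P w⟫ + S (v - P v) (w - P w))
    (B : H' →L[ℝ] H)
    (D : H → H' → H → ℝ)
    (hD : ∀ (w : H) (r : H') (v : H),
      D w r v = ah w v - ⟪N w, v⟫ + ⟪P v - v, B r⟫) :
    ∀ (w : H) (r : H') (v : H),
      |D w r v|
        ≤ ((2 + αS) * νmax * ‖w - P w‖ + ‖N w - P (N w)‖ + ‖B r - P (B r)‖) * ‖v‖ := by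
  -- basic positivity facts
  have hνmax : (0:ℝ) ≤ νmax := le_trans hνmin.le hνν
  have hαS : (0:ℝ) ≤ αS := le_trans hαs.le hαα
  have hNvv : ∀ v : H, (0:ℝ) ≤ ⟪N v, v⟫ := fun v =>
    le_trans (mul_nonneg hνmin.le (sq_nonneg _)) (hNlow v)
  have hNvv' : ∀ v : H, ⟪N v, v⟫ ≤ νmax * ‖v‖ ^ 2 := by
    intro v
    calc ⟪N v, v⟫ ≤ ‖N v‖ * ‖v‖ := real_inner_le_norm _ _
    _ ≤ (νmax * ‖v‖) * ‖v‖ := mul_le_mul_of_nonneg_right (hNhigh v) (norm_nonneg _)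
    _ = νmax * ‖v‖ ^ 2 := by ring
  have hSpos : ∀ z : H, (0:ℝ) ≤ S z z := fun z =>
    le_trans (mul_nonneg hαs.le (hNvv z)) (hSlow z)
  -- Cauchy–Schwarz for S
  have hCS : ∀ x y : H, (S x y) ^ 2 ≤ S x x * S y y := by
    intro x y
    have h : ∀ t : ℝ, 0 ≤ (S y y) * (t * t) + (2 * S x y) * t + S x x := by
      intro t
      have h0 := hSpos (x + t • y)
      have hexp : S (x + t • y) (x + t • y)
          = (S y y) * (t * t) + (2 * S x y) * t + S x x := by
        simp only [map_add, map_smul, LinearMap.add_apply, LinearMap.smul_apply,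
          smul_eq_mul]
        rw [hSsymm y x]; ring
      rw [hexp] at h0; exact h0
    have hd := discrim_le_zero h
    rw [discrim] at hd
    nlinarith [hd]
  -- |S x y| ≤ αS * νmax * ‖x‖ * ‖y‖
  have hSbound : ∀ x y : H, |S x y| ≤ αS * νmax * ‖x‖ * ‖y‖ := by
    intro x y
    have h1 : S x x ≤ αS * νmax * ‖x‖ ^ 2 := by
      calc S x x ≤ αS * ⟪N x, x⟫ := hShigh x
      _ ≤ αS * (νmax * ‖x‖ ^ 2) := mul_le_mul_of_nonneg_left (hNvv' x) hαS
      _ = αS * νmax * ‖x‖ ^ 2 := by ring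
    have h2 : S y y ≤ αS * νmax * ‖y‖ ^ 2 := by
      calc S y y ≤ αS * ⟪N y, y⟫ := hShigh y
      _ ≤ αS * (νmax * ‖y‖ ^ 2) := mul_le_mul_of_nonneg_left (hNvv' y) hαS
      _ = αS * νmax * ‖y‖ ^ 2 := by ring
    have hsq : (S x y) ^ 2 ≤ (αS * νmax * ‖x‖ * ‖y‖) ^ 2 := by
      nlinarith [hCS x y, hSpos x, hSpos y, sq_nonneg ‖x‖, sq_nonneg ‖y‖,
        mul_nonneg (mul_nonneg hαS hνmax) (sq_nonneg ‖x‖)]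
    have hR : (0:ℝ) ≤ αS * νmax * ‖x‖ * ‖y‖ := by positivity
    calc |S x y| = Real.sqrt ((S x y) ^ 2) := (Real.sqrt_sq_eq_abs _).symm
    _ ≤ Real.sqrt ((αS * νmax * ‖x‖ * ‖y‖) ^ 2) := Real.sqrt_le_sqrt hsq
    _ = αS * νmax * ‖x‖ * ‖y‖ := Real.sqrt_sq hR
  -- orthogonality
  have hperp : ∀ u v : H, ⟪P u, v - P v⟫ = 0 := by
    intro u v
    have hmem : v - P v ∈ Kᗮ := by
      rw [hP v]; exact K.sub_starProjection_mem_orthogonal v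
    have hK : P u ∈ K := by rw [hP u]; exact (K.orthogonalProjectionOnto u).2
    exact (Submodule.mem_orthogonal K _).mp hmem _ hK
  -- Pythagoras and norm bounds
  have hPyth : ∀ v : H, ‖P v‖ ^ 2 + ‖v - P v‖ ^ 2 = ‖v‖ ^ 2 := by
    intro v
    have h0 : ⟪P v, v - P v⟫ = 0 := hperp v v
    have h := norm_add_sq_real (P v) (v - P v)
    rw [h0] at h
    have hv : P v + (v - P v) = v := by abel
    rw [hv] at h; linarith
  have hPn : ∀ v : H, ‖P v‖ ≤ ‖v‖ := by
    intro v
    have h := hPyth v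
    nlinarith [norm_nonneg (P v), norm_nonneg v, sq_nonneg ‖v - P v‖]
  have hPn' : ∀ v : H, ‖v - P v‖ ≤ ‖v‖ := by
    intro v
    have h := hPyth v
    nlinarith [norm_nonneg (v - P v), norm_nonneg v, sq_nonneg ‖P v‖]
  intro w r v
  -- the decomposition identity
  have hId : D w r v = ⟪N (P w - w), P v⟫ + ⟪N w - P (N w), P v - v⟫
      + S (w - P w) (v - P v) + ⟪P v - v, B r - P (B r)⟫ := by
    rw [hD, hah]
    have e1 : ⟪P (N w), P v⟫ - ⟪P (N w), v⟫ = 0 := by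
      have h := hperp (N w) v
      rw [inner_sub_right] at h; linarith
    have e2 : ⟪P v, P (B r)⟫ - ⟪v, P (B r)⟫ = 0 := by
      have h := hperp (B r) v
      rw [inner_sub_right] at h
      have c1 := real_inner_comm (P v) (P (B r))
      have c2 := real_inner_comm v (P (B r))
      linarith
    simp only [map_sub, inner_sub_left, inner_sub_right]
    linarith
  rw [hId]
  -- bound each term
  have hb1 : |⟪N (P w - w), P v⟫| ≤ νmax * ‖w - P w‖ * ‖v‖ := by
    calc |⟪N (P w - w), P v⟫| ≤ ‖N (P w - w)‖ * ‖P v‖ := abs_real_inner_le_norm _ _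
    _ ≤ (νmax * ‖P w - w‖) * ‖v‖ :=
        mul_le_mul (hNhigh _) (hPn v) (norm_nonneg _)
          (mul_nonneg hνmax (norm_nonneg _))
    _ = νmax * ‖w - P w‖ * ‖v‖ := by rw [norm_sub_rev]
  have hb2 : |⟪N w - P (N w), P v - v⟫| ≤ ‖N w - P (N w)‖ * ‖v‖ := by
    calc |⟪N w - P (N w), P v - v⟫| ≤ ‖N w - P (N w)‖ * ‖P v - v‖ :=
        abs_real_inner_le_norm _ _
    _ ≤ ‖N w - P (N w)‖ * ‖v‖ := by
        rw [norm_sub_rev (P v) v]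
        exact mul_le_mul_of_nonneg_left (hPn' v) (norm_nonneg _)
  have hb3 : |S (w - P w) (v - P v)| ≤ αS * νmax * ‖w - P w‖ * ‖v‖ := by
    calc |S (w - P w) (v - P v)| ≤ αS * νmax * ‖w - P w‖ * ‖v - P v‖ :=
        hSbound _ _
    _ ≤ αS * νmax * ‖w - P w‖ * ‖v‖ :=
        mul_le_mul_of_nonneg_left (hPn' v)
          (mul_nonneg (mul_nonneg hαS hνmax) (norm_nonneg _))
  have hb4 : |⟪P v - v, B r - P (B r)⟫| ≤ ‖B r - P (B r)‖ * ‖v‖ := by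
    calc |⟪P v - v, B r - P (B r)⟫| ≤ ‖P v - v‖ * ‖B r - P (B r)‖ :=
        abs_real_inner_le_norm _ _
    _ ≤ ‖v‖ * ‖B r - P (B r)‖ := by
        rw [norm_sub_rev (P v) v]
        exact mul_le_mul_of_nonneg_right (hPn' v) (norm_nonneg _)
    _ = ‖B r - P (B r)‖ * ‖v‖ := mul_comm _ _
  have htri : |⟪N (P w - w), P v⟫ + ⟪N w - P (N w), P v - v⟫
      + S (w - P w) (v - P v) + ⟪P v - v, B r - P (B r)⟫|
      ≤ |⟪N (P w - w), P v⟫| + |⟪N w - P (N w), P v - v⟫|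
        + |S (w - P w) (v - P v)| + |⟪P v - v, B r - P (B r)⟫| := by
    calc _ ≤ |⟪N (P w - w), P v⟫ + ⟪N w - P (N w), P v - v⟫
        + S (w - P w) (v - P v)| + |⟪P v - v, B r - P (B r)⟫| := abs_add_le _ _
    _ ≤ |⟪N (P w - w), P v⟫ + ⟪N w - P (N w), P v - v⟫| + |S (w - P w) (v - P v)|
        + |⟪P v - v, B r - P (B r)⟫| := by
        have := abs_add_le (⟪N (P w - w), P v⟫ + ⟪N w - P (N w), P v - v⟫)
          (S (w - P w) (v - P v))
        linarith
    _ ≤ _ := by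
        have := abs_add_le ⟪N (P w - w), P v⟫ ⟪N w - P (N w), P v - v⟫
        linarith
  have hslack : (0:ℝ) ≤ νmax * ‖w - P w‖ * ‖v‖ := by positivity
  calc |⟪N (P w - w), P v⟫ + ⟪N w - P (N w), P v - v⟫
      + S (w - P w) (v - P v) + ⟪P v - v, B r - P (B r)⟫|
      ≤ |⟪N (P w - w), P v⟫| + |⟪N w - P (N w), P v - v⟫|
        + |S (w - P w) (v - P v)| + |⟪P v - v, B r - P (B r)⟫| := htri
  _ ≤ ((2 + αS) * νmax * ‖w - P w‖ + ‖N w - P (N w)‖ + ‖B r - P (B r)‖) * ‖v‖ := by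
      nlinarith [hb1, hb2, hb3, hb4, hslack]
end

section
/- (Combined consistency-error estimate, estimate (4.12) of the paper.) Define the consistency discrepancy D(w, r, v) := a_h(w,v) − a(w,v) + ⟨P v − v, B r⟩. Then for all w, v ∈ H and r ∈ H' one has |D(w, r, v)| ≤ ( (2 + α^*) ν_max + ‖B‖ ) · ‖v − P v‖ · ( ‖w‖ + ‖r‖ ) + ‖N v − P(N v)‖ · ‖w‖, where ‖B‖ denotes the operator norm of B. -/
open scoped RealInnerProductSpace

/-- **Combined consistency-error estimate** (estimate (4.12) of the paper).
With `D(w, r, v) := a_h(w,v) − a(w,v) + ⟪P v − v, B r⟫`, one has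
`|D(w, r, v)| ≤ ((2 + α^*) ν_max + ‖B‖) ‖v − P v‖ (‖w‖ + ‖r‖) + ‖N v − P(N v)‖ ‖w‖`. -/
theorem vem_consistency_error_4_12
    {H : Type*} [NormedAddCommGroup H] [InnerProductSpace ℝ H]
    {H' : Type*} [NormedAddCommGroup H'] [InnerProductSpace ℝ H']
    (K : Submodule ℝ H) [K.HasOrthogonalProjection]
    (P : H →L[ℝ] H) (hP : ∀ v : H, P v = (K.orthogonalProjectionOnto v : H))
    (N : H →L[ℝ] H) (hNsa : ∀ v w : H, ⟪N v, w⟫ = ⟪v, N w⟫)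
    (νmin νmax : ℝ) (hνmin : 0 < νmin) (hνν : νmin ≤ νmax)
    (hNlow : ∀ v : H, νmin * ‖v‖ ^ 2 ≤ ⟪N v, v⟫)
    (hNhigh : ∀ v : H, ‖N v‖ ≤ νmax * ‖v‖)
    (S : H →ₗ[ℝ] H →ₗ[ℝ] ℝ) (hSsymm : ∀ v w : H, S v w = S w v)
    (αs αS : ℝ) (hαs : 0 < αs) (hαα : αs ≤ αS)
    (hSlow : ∀ v : H, αs * ⟪N v, v⟫ ≤ S v v)
    (hShigh : ∀ v : H, S v v ≤ αS * ⟪N v, v⟫)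
    (ah : H → H → ℝ)
    (hah : ∀ v w : H, ah v w = ⟪N (P v), P w⟫ + S (v - P v) (w - P w))
    (B : H' →L[ℝ] H)
    (D : H → H' → H → ℝ)
    (hD : ∀ (w : H) (r : H') (v : H),
      D w r v = ah w v - ⟪N w, v⟫ + ⟪P v - v, B r⟫) :
    ∀ (w : H) (r : H') (v : H),
      |D w r v|
        ≤ ((2 + αS) * νmax + ‖B‖) * ‖v - P v‖ * (‖w‖ + ‖r‖)
          + ‖N v - P (N v)‖ * ‖w‖ := by
  intro w r v
  have hPmem : ∀ x : H, P x ∈ K := fun x => by rw [hP]; exact (K.orthogonalProjectionOnto x).2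
  have hOrth : ∀ x y : H, y ∈ K → ⟪x - P x, y⟫ = 0 := fun x y hy => by
    rw [hP, ← Submodule.starProjection_apply]; exact K.starProjection_inner_eq_zero x y hy
  -- Pythagoras
  have hpy : ∀ x : H, ‖x - P x‖ ^ 2 + ‖P x‖ ^ 2 = ‖x‖ ^ 2 := by
    intro x
    have h0 : ⟪x - P x, P x⟫ = 0 := hOrth x (P x) (hPmem x)
    have := norm_add_sq_real (x - P x) (P x)
    rw [h0] at this
    simp at this
    linarith
  have hsubnorm : ∀ x : H, ‖x - P x‖ ≤ ‖x‖ := by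
    intro x
    nlinarith [hpy x, norm_nonneg (x - P x), norm_nonneg x, norm_nonneg (P x)]
  have hPnorm : ∀ x : H, ‖P x‖ ≤ ‖x‖ := by
    intro x
    nlinarith [hpy x, norm_nonneg (x - P x), norm_nonneg x, norm_nonneg (P x)]
  have hαS0 : (0:ℝ) < αS := lt_of_lt_of_le hαs hαα
  have hνmax0 : (0:ℝ) < νmax := lt_of_lt_of_le hνmin hνν
  -- S is positive semidefinite
  have hNpos : ∀ x : H, 0 ≤ ⟪N x, x⟫ := fun x =>
    le_trans (by positivity) (hNlow x)
  have hSpos : ∀ x : H, 0 ≤ S x x := fun x =>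
    le_trans (mul_nonneg hαs.le (hNpos x)) (hSlow x)
  -- Cauchy-Schwarz for S
  have hCS : ∀ x y : H, (S x y) ^ 2 ≤ S x x * S y y := by
    intro x y
    have hquad : ∀ t : ℝ, 0 ≤ S y y * (t * t) + (2 * S x y) * t + S x x := by
      intro t
      have h := hSpos (x + t • y)
      simp only [map_add, map_smul, LinearMap.add_apply, LinearMap.smul_apply,
        smul_eq_mul] at h
      rw [← hSsymm x y] at h
      ring_nf at h ⊢
      linarith
    have hd := discrim_le_zero hquad
    rw [discrim] at hd
    nlinarith [hd]
  -- bound on S diagonal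
  have hSdiag : ∀ x : H, S x x ≤ αS * νmax * ‖x‖ ^ 2 := by
    intro x
    have h1 := hShigh x
    have h2 := real_inner_le_norm (N x) x
    have h3 := hNhigh x
    have h4 : ⟪N x, x⟫ ≤ νmax * ‖x‖ ^ 2 := by nlinarith [norm_nonneg x]
    nlinarith
  -- bound on S off-diagonal
  have hSbd : ∀ x y : H, |S x y| ≤ αS * νmax * ‖x‖ * ‖y‖ := by
    intro x y
    have h1 := hCS x y
    have h2 := hSdiag x
    have h3 := hSdiag y
    have h4 := hSpos x
    have h5 := hSpos y
    have hM : (0:ℝ) ≤ αS * νmax * ‖x‖ * ‖y‖ := by positivity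
    rw [abs_le]
    constructor <;> nlinarith [sq_nonneg (S x y + αS * νmax * ‖x‖ * ‖y‖),
      sq_nonneg (S x y - αS * νmax * ‖x‖ * ‖y‖), norm_nonneg x, norm_nonneg y,
      mul_nonneg (norm_nonneg x) (norm_nonneg y)]
  -- key decomposition
  have e1 : ⟪P w - w, P (N v)⟫ = (0:ℝ) := by
    have h := hOrth w (P (N v)) (hPmem (N v))
    rw [show P w - w = -(w - P w) by abel, inner_neg_left, h, neg_zero]
  have key : D w r v = ⟪N (P w), P v - v⟫ + ⟪P w - w, N v - P (N v)⟫
      + S (w - P w) (v - P v) + ⟪P v - v, B r⟫ := by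
    rw [hD w r v, hah]
    have h1 : ⟪N (P w), v⟫ = ⟪P w, N v⟫ := hNsa (P w) v
    have h2 : ⟪N w, v⟫ = ⟪w, N v⟫ := hNsa w v
    have h3 : ⟪P w - w, P (N v)⟫ = (0:ℝ) := e1
    simp only [inner_sub_left, inner_sub_right] at *
    linarith
  -- bounds on each term
  have b1 : |⟪N (P w), P v - v⟫| ≤ νmax * ‖w‖ * ‖v - P v‖ := by
    have hn : ‖N (P w)‖ ≤ νmax * ‖w‖ :=
      le_trans (hNhigh (P w)) (mul_le_mul_of_nonneg_left (hPnorm w) hνmax0.le)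
    calc |⟪N (P w), P v - v⟫| ≤ ‖N (P w)‖ * ‖P v - v‖ := abs_real_inner_le_norm _ _
    _ = ‖N (P w)‖ * ‖v - P v‖ := by rw [norm_sub_rev]
    _ ≤ νmax * ‖w‖ * ‖v - P v‖ := mul_le_mul_of_nonneg_right hn (norm_nonneg _)
  have b2 : |⟪P w - w, N v - P (N v)⟫| ≤ ‖N v - P (N v)‖ * ‖w‖ := by
    calc |⟪P w - w, N v - P (N v)⟫| ≤ ‖P w - w‖ * ‖N v - P (N v)‖ :=
      abs_real_inner_le_norm _ _
    _ = ‖w - P w‖ * ‖N v - P (N v)‖ := by rw [norm_sub_rev]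
    _ ≤ ‖w‖ * ‖N v - P (N v)‖ := mul_le_mul_of_nonneg_right (hsubnorm w) (norm_nonneg _)
    _ = ‖N v - P (N v)‖ * ‖w‖ := mul_comm _ _
  have b3 : |S (w - P w) (v - P v)| ≤ αS * νmax * ‖w‖ * ‖v - P v‖ := by
    have h := hSbd (w - P w) (v - P v)
    have h2 : αS * νmax * ‖w - P w‖ * ‖v - P v‖ ≤ αS * νmax * ‖w‖ * ‖v - P v‖ := by
      have := mul_le_mul_of_nonneg_left (hsubnorm w)
        (mul_nonneg hαS0.le hνmax0.le)
      exact mul_le_mul_of_nonneg_right this (norm_nonneg _)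
    linarith
  have b4 : |⟪P v - v, B r⟫| ≤ ‖B‖ * ‖v - P v‖ * ‖r‖ := by
    calc |⟪P v - v, B r⟫| ≤ ‖P v - v‖ * ‖B r‖ := abs_real_inner_le_norm _ _
    _ = ‖v - P v‖ * ‖B r‖ := by rw [norm_sub_rev]
    _ ≤ ‖v - P v‖ * (‖B‖ * ‖r‖) :=
        mul_le_mul_of_nonneg_left (B.le_opNorm r) (norm_nonneg _)
    _ = ‖B‖ * ‖v - P v‖ * ‖r‖ := by ring
  have habs : |D w r v| ≤ |⟪N (P w), P v - v⟫| + |⟪P w - w, N v - P (N v)⟫|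
      + |S (w - P w) (v - P v)| + |⟪P v - v, B r⟫| := by
    rw [key]
    have a1 := abs_add_le (⟪N (P w), P v - v⟫ + ⟪P w - w, N v - P (N v)⟫
      + S (w - P w) (v - P v)) ⟪P v - v, B r⟫
    have a2 := abs_add_le (⟪N (P w), P v - v⟫ + ⟪P w - w, N v - P (N v)⟫)
      (S (w - P w) (v - P v))
    have a3 := abs_add_le ⟪N (P w), P v - v⟫ ⟪P w - w, N v - P (N v)⟫
    linarith
  nlinarith [habs, b1, b2, b3, b4,
    mul_nonneg (mul_nonneg hνmax0.le (norm_nonneg w)) (norm_nonneg (v - P v)),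
    mul_nonneg (mul_nonneg hνmax0.le (norm_nonneg r)) (norm_nonneg (v - P v)),
    mul_nonneg (mul_nonneg (mul_nonneg hαS0.le hνmax0.le) (norm_nonneg r)) (norm_nonneg (v - P v)),
    mul_nonneg (mul_nonneg (norm_nonneg B) (norm_nonneg w)) (norm_nonneg (v - P v))]
end
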